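/- Let H be a fixed connected graph on h vertices with root o, and let (G_n) be a sequence of finite graphs. Let v_n be a uniformly random vertex of G_n, D_n its degree, and X_n := X(H, G_n, v_n) the number of embeddings of H into G_n mapping o to v_n. If X_n converges in distribution to a random variable X* and the sequence (D_n^{h−1}) is uniformly integrable, then |V(G_n)|^{−1} emb(H, G_n) → E[X*] as n → ∞. -/

import Mathlib

open Finset SimpleGraph MeasureTheory Filter
open scoped Classical Topology ENNReal

lemma walk_crossing {VH : Type*} {H : SimpleGraph VH} {s : Set VH} {a b : VH}
    (w : H.Walk a b) : a ∈ s → b ∉ s → ∃ p q, p ∈ s ∧ q ∉ s ∧ H.Adj p q := by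
  induction w with
  | nil => intro ha hb; exact absurd ha hb
  | @cons x y z hadj w ih =>
    intro ha hb
    by_cases hy : y ∈ s
    · exact ih hy hb
    · exact ⟨x, y, ha, hy, hadj⟩

lemma count_ext_le {VH : Type*} [Fintype VH] {V : Type*} [Fintype V]
    (H : SimpleGraph VH) (hconn : H.Connected) (G : SimpleGraph V)
    (a : VH) (d : ℕ) :
    ∀ t : Finset VH, a ∉ t → ∀ f0 : VH → V,
      (univ.filter (fun σ : VH → V =>
        (∀ b c, H.Adj b c → G.Adj (σ b) (σ c)) ∧ Function.Injective σ ∧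
        (∀ b, G.degree (σ b) ≤ d) ∧ ∀ b ∉ t, σ b = f0 b)).card ≤ d ^ t.card := by
  intro t
  induction t using Finset.strongInduction with
  | _ t ih =>
    intro hat f0
    rcases t.eq_empty_or_nonempty with rfl | ⟨c0, hc0⟩
    · simp only [Finset.card_empty, pow_zero]
      refine Finset.card_le_one.mpr ?_
      intro σ hσ τ hτ
      simp only [mem_filter, mem_univ, true_and] at hσ hτ
      funext b
      rw [hσ.2.2.2 b (Finset.notMem_empty b), hτ.2.2.2 b (Finset.notMem_empty b)]
    · set A := univ.filter (fun σ : VH → V =>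
        (∀ b c, H.Adj b c → G.Adj (σ b) (σ c)) ∧ Function.Injective σ ∧
        (∀ b, G.degree (σ b) ≤ d) ∧ ∀ b ∉ t, σ b = f0 b) with hA
      rcases A.eq_empty_or_nonempty with hAe | ⟨σ0, hσ0⟩
      · simp [hAe]
      · -- find crossing edge
        obtain ⟨w⟩ := (hconn a c0)
        obtain ⟨p, q, hp, hq, hpq⟩ :=
          walk_crossing (s := {x | x ∉ t}) w hat (by simpa using hc0)
        simp only [Set.mem_setOf_eq, not_not] at hp hq
        have hqa : q ≠ a := fun h => hat (h ▸ hq)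
        rw [hA, mem_filter] at hσ0
        replace hσ0 := hσ0.2
        have hdegp : G.degree (f0 p) ≤ d := by
          have := hσ0.2.2.1 p
          rwa [hσ0.2.2.2 p hp] at this
        have hsub : A ⊆ (G.neighborFinset (f0 p)).biUnion (fun w =>
            univ.filter (fun σ : VH → V =>
              (∀ b c, H.Adj b c → G.Adj (σ b) (σ c)) ∧ Function.Injective σ ∧
              (∀ b, G.degree (σ b) ≤ d) ∧ ∀ b ∉ t.erase q, σ b = Function.update f0 q w b)) := by
          intro σ hσ
          simp only [hA, mem_filter, mem_univ, true_and] at hσ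
          refine Finset.mem_biUnion.2 ⟨σ q, ?_, ?_⟩
          · rw [SimpleGraph.mem_neighborFinset, ← hσ.2.2.2 p hp]
            exact hσ.1 p q hpq
          · simp only [mem_filter, mem_univ, true_and]
            refine ⟨hσ.1, hσ.2.1, hσ.2.2.1, ?_⟩
            intro b hb
            by_cases hbq : b = q
            · subst hbq; simp [Function.update_self]
            · have hbt : b ∉ t := fun h => hb (Finset.mem_erase.2 ⟨hbq, h⟩)
              rw [hσ.2.2.2 b hbt, Function.update_of_ne hbq]
        calc A.card ≤ ∑ w ∈ G.neighborFinset (f0 p),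
              (univ.filter (fun σ : VH → V =>
                (∀ b c, H.Adj b c → G.Adj (σ b) (σ c)) ∧ Function.Injective σ ∧
                (∀ b, G.degree (σ b) ≤ d) ∧ ∀ b ∉ t.erase q, σ b = Function.update f0 q w b)).card :=
              le_trans (Finset.card_le_card hsub) (Finset.card_biUnion_le)
          _ ≤ ∑ w ∈ G.neighborFinset (f0 p), d ^ (t.erase q).card := by
              refine Finset.sum_le_sum fun w _ => ?_
              exact ih (t.erase q) (Finset.erase_ssubset hq) (fun h => hat (Finset.mem_of_mem_erase h)) _
          _ = G.degree (f0 p) * d ^ (t.erase q).card := by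
              rw [Finset.sum_const, smul_eq_mul, SimpleGraph.card_neighborFinset_eq_degree]
          _ ≤ d * d ^ (t.erase q).card := Nat.mul_le_mul_right _ hdegp
          _ = d ^ t.card := by
              rw [← Finset.card_erase_add_one hq, pow_succ]
              ring

lemma count_rooted_le {VH : Type*} [Fintype VH] {V : Type*} [Fintype V]
    (H : SimpleGraph VH) (hconn : H.Connected) (G : SimpleGraph V)
    (a : VH) (u : V) (d : ℕ) :
    (univ.filter (fun σ : VH → V =>
        (∀ b c, H.Adj b c → G.Adj (σ b) (σ c)) ∧ Function.Injective σ ∧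
        σ a = u ∧ ∀ b, G.degree (σ b) ≤ d)).card ≤ d ^ (Fintype.card VH - 1) := by
  have hsub : (univ.filter (fun σ : VH → V =>
        (∀ b c, H.Adj b c → G.Adj (σ b) (σ c)) ∧ Function.Injective σ ∧
        σ a = u ∧ ∀ b, G.degree (σ b) ≤ d)) ⊆
      (univ.filter (fun σ : VH → V =>
        (∀ b c, H.Adj b c → G.Adj (σ b) (σ c)) ∧ Function.Injective σ ∧
        (∀ b, G.degree (σ b) ≤ d) ∧ ∀ b ∉ Finset.univ.erase a, σ b = (fun _ => u) b)) := by
    intro σ hσ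
    simp only [mem_filter, mem_univ, true_and] at hσ ⊢
    refine ⟨hσ.1, hσ.2.1, hσ.2.2.2, fun b hb => ?_⟩
    have : b = a := by
      by_contra hba
      exact hb (Finset.mem_erase.2 ⟨hba, Finset.mem_univ b⟩)
    rw [this, hσ.2.2.1]
  have := count_ext_le H hconn G a d (Finset.univ.erase a)
    (fun h => (Finset.mem_erase.1 h).1 rfl) (fun _ => u)
  rw [Finset.card_erase_of_mem (Finset.mem_univ a), Finset.card_univ] at this
  exact le_trans (Finset.card_le_card hsub) this

lemma key_ineq {VH : Type*} [Fintype VH] {V : Type*} [Fintype V]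
    (H : SimpleGraph VH) (o : VH) (hconn : H.Connected) (G : SimpleGraph V)
    (Δ : ℕ) :
    (univ.filter (fun σ : VH → V =>
        (∀ a b, H.Adj a b → G.Adj (σ a) (σ b)) ∧ Function.Injective σ)).card ≤
      (∑ v : V, min ((univ.filter (fun σ : VH → V =>
        (∀ a b, H.Adj a b → G.Adj (σ a) (σ b)) ∧ Function.Injective σ ∧
        σ o = v)).card) ((Δ - 1) ^ (Fintype.card VH - 1))) +
      Fintype.card VH *
        ∑ u ∈ univ.filter (fun u : V => Δ ≤ G.degree u),
          G.degree u ^ (Fintype.card VH - 1) := by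
  classical
  set M := (Δ - 1) ^ (Fintype.card VH - 1) with hM
  set Emb : (VH → V) → Prop := fun σ =>
    (∀ a b, H.Adj a b → G.Adj (σ a) (σ b)) ∧ Function.Injective σ with hEmb
  set Bad : Finset (VH → V) := univ.filter (fun σ => Emb σ ∧ ∃ a, Δ ≤ G.degree (σ a)) with hBad
  have hVHne : Nonempty VH := hconn.nonempty
  -- total = sum over roots
  have htot : (univ.filter Emb).card =
      ∑ v : V, (univ.filter (fun σ : VH → V => Emb σ ∧ σ o = v)).card := by
    rw [Finset.card_eq_sum_card_fiberwise (f := fun σ : VH → V => σ o)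
      (t := univ) (fun σ _ => Finset.mem_univ _)]
    refine Finset.sum_congr rfl fun v _ => ?_
    congr 1
    ext σ
    simp [Finset.mem_filter, and_assoc]
  have hbadtot : Bad.card =
      ∑ v : V, (univ.filter (fun σ : VH → V =>
        (Emb σ ∧ ∃ a, Δ ≤ G.degree (σ a)) ∧ σ o = v)).card := by
    rw [hBad, Finset.card_eq_sum_card_fiberwise (f := fun σ : VH → V => σ o)
      (t := univ) (fun σ _ => Finset.mem_univ _)]
    refine Finset.sum_congr rfl fun v _ => ?_
    congr 1
    ext σ
    simp [Finset.mem_filter, and_assoc]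
  -- pointwise bound
  have hpt : ∀ v : V, (univ.filter (fun σ : VH → V => Emb σ ∧ σ o = v)).card ≤
      min ((univ.filter (fun σ : VH → V => Emb σ ∧ σ o = v)).card) M +
      (univ.filter (fun σ : VH → V =>
        (Emb σ ∧ ∃ a, Δ ≤ G.degree (σ a)) ∧ σ o = v)).card := by
    intro v
    rcases le_or_gt ((univ.filter (fun σ : VH → V => Emb σ ∧ σ o = v)).card) M with hle | hlt
    · rw [min_eq_left hle]; exact Nat.le_add_right _ _
    · rw [min_eq_right hlt.le]
      -- split into good and bad
      have hsplit := Finset.card_filter_add_card_filter_not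
        (s := univ.filter (fun σ : VH → V => Emb σ ∧ σ o = v))
        (p := fun σ => ∃ a, Δ ≤ G.degree (σ a))
      have hgood : ((univ.filter (fun σ : VH → V => Emb σ ∧ σ o = v)).filter
          (fun σ => ¬ ∃ a, Δ ≤ G.degree (σ a))).card ≤ M := by
        rw [hM]
        refine le_trans (Finset.card_le_card ?_) (count_rooted_le H hconn G o v (Δ - 1))
        intro σ hσ
        simp only [Finset.mem_filter, Finset.mem_univ, true_and, hEmb] at hσ ⊢
        push_neg at hσ
        obtain ⟨⟨⟨h1, h2⟩, h3⟩, h4⟩ := hσ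
        exact ⟨h1, h2, h3, fun b => Nat.le_pred_of_lt (h4 b)⟩
      have hbadv : ((univ.filter (fun σ : VH → V => Emb σ ∧ σ o = v)).filter
          (fun σ => ∃ a, Δ ≤ G.degree (σ a))).card =
          (univ.filter (fun σ : VH → V =>
            (Emb σ ∧ ∃ a, Δ ≤ G.degree (σ a)) ∧ σ o = v)).card := by
        congr 1
        ext σ
        simp only [Finset.mem_filter, Finset.mem_univ, true_and]
        tauto
      calc (univ.filter (fun σ : VH → V => Emb σ ∧ σ o = v)).card
          = _ + _ := hsplit.symm
        _ ≤ (univ.filter (fun σ : VH → V =>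
            (Emb σ ∧ ∃ a, Δ ≤ G.degree (σ a)) ∧ σ o = v)).card + M :=
            Nat.add_le_add (le_of_eq hbadv) hgood
        _ = M + _ := Nat.add_comm _ _
  -- bad total bound
  have hbadle : Bad.card ≤ Fintype.card VH *
      ∑ u ∈ univ.filter (fun u : V => Δ ≤ G.degree u),
        G.degree u ^ (Fintype.card VH - 1) := by
    have hsub : Bad ⊆ (univ : Finset VH).biUnion (fun a =>
        (univ.filter (fun u : V => Δ ≤ G.degree u)).biUnion (fun u =>
          univ.filter (fun σ : VH → V =>
            (∀ b c, H.Adj b c → G.Adj (σ b) (σ c)) ∧ Function.Injective σ ∧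
            σ a = u ∧ ∀ b, G.degree (σ b) ≤ G.degree u))) := by
      intro σ hσ
      rw [hBad, Finset.mem_filter] at hσ
      obtain ⟨-, hσE, a0, ha0⟩ := hσ
      obtain ⟨amax, -, hamax⟩ := Finset.exists_max_image (univ : Finset VH)
        (fun a => G.degree (σ a)) ⟨Classical.arbitrary VH, Finset.mem_univ _⟩
      refine Finset.mem_biUnion.2 ⟨amax, Finset.mem_univ _, Finset.mem_biUnion.2
        ⟨σ amax, ?_, ?_⟩⟩
      · exact Finset.mem_filter.2 ⟨Finset.mem_univ _,
          le_trans ha0 (hamax a0 (Finset.mem_univ _))⟩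
      · exact Finset.mem_filter.2 ⟨Finset.mem_univ _,
          ⟨hσE.1, hσE.2, rfl, fun b => hamax b (Finset.mem_univ _)⟩⟩
    calc Bad.card ≤ ∑ a : VH, ((univ.filter (fun u : V => Δ ≤ G.degree u)).biUnion (fun u =>
          univ.filter (fun σ : VH → V =>
            (∀ b c, H.Adj b c → G.Adj (σ b) (σ c)) ∧ Function.Injective σ ∧
            σ a = u ∧ ∀ b, G.degree (σ b) ≤ G.degree u))).card :=
        le_trans (Finset.card_le_card hsub) Finset.card_biUnion_le
      _ ≤ ∑ _a : VH, ∑ u ∈ univ.filter (fun u : V => Δ ≤ G.degree u),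
            G.degree u ^ (Fintype.card VH - 1) := by
          refine Finset.sum_le_sum fun a _ => ?_
          refine le_trans Finset.card_biUnion_le (Finset.sum_le_sum fun u _ => ?_)
          exact count_rooted_le H hconn G a u (G.degree u)
      _ = Fintype.card VH * ∑ u ∈ univ.filter (fun u : V => Δ ≤ G.degree u),
            G.degree u ^ (Fintype.card VH - 1) := by
          rw [Finset.sum_const, Finset.card_univ, smul_eq_mul]
  calc (univ.filter Emb).card = ∑ v : V, (univ.filter (fun σ : VH → V => Emb σ ∧ σ o = v)).card := htot
    _ ≤ ∑ v : V, (min ((univ.filter (fun σ : VH → V => Emb σ ∧ σ o = v)).card) M +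
        (univ.filter (fun σ : VH → V =>
          (Emb σ ∧ ∃ a, Δ ≤ G.degree (σ a)) ∧ σ o = v)).card) :=
        Finset.sum_le_sum fun v _ => hpt v
    _ = (∑ v : V, min ((univ.filter (fun σ : VH → V => Emb σ ∧ σ o = v)).card) M) + Bad.card := by
        rw [Finset.sum_add_distrib, hbadtot]
    _ ≤ (∑ v : V, min ((univ.filter (fun σ : VH → V => Emb σ ∧ σ o = v)).card) M) +
        Fintype.card VH * ∑ u ∈ univ.filter (fun u : V => Δ ≤ G.degree u),
          G.degree u ^ (Fintype.card VH - 1) := Nat.add_le_add_left hbadle _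
    _ = _ := by
        congr 1
        refine Finset.sum_congr rfl fun v _ => ?_
        congr 2
        ext σ
        simp only [Finset.mem_filter, Finset.mem_univ, true_and, hEmb]
        tauto

lemma min_eq_sum_ite (x K : ℕ) :
    min x K = ∑ j ∈ Finset.range K, if j + 1 ≤ x then 1 else 0 := by
  rw [← Finset.card_filter]
  have : (Finset.range K).filter (fun j => j + 1 ≤ x) = Finset.range (min x K) := by
    ext j
    simp only [Finset.mem_filter, Finset.mem_range, lt_min_iff]
    omega
  rw [this, Finset.card_range]


/-- Generalization of Theorem 2.1 of Kurauskas (2015): if `X_n`, the number of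
embeddings of `H` into `G_n` rooted at a uniformly random vertex, converges in
distribution to a (ℕ-valued) random variable `X*`, and the `(h-1)`-th powers of the
random degrees `D_n` are uniformly integrable, then
`|V(G_n)|⁻¹ emb(H, G_n) → E[X*]`.  (For ℕ-valued random variables, convergence in
distribution is equivalent to pointwise convergence of the point masses, which is
the formulation used here; the uniform random vertex is encoded by counting
fractions.) -/
theorem emb_density_tendsto_of_tendsto_distribution
    {VH : Type*} [Fintype VH]
    (H : SimpleGraph VH) (o : VH)
    (h : ℕ) (hcard : Fintype.card VH = h) (hconn : H.Connected)
    (V : ℕ → Type*) [∀ n, Fintype (V n)] [∀ n, Nonempty (V n)]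
    (G : ∀ n, SimpleGraph (V n))
    -- `X n v`: number of embeddings of `H` into `G n` mapping `o` to `v`
    (X : ∀ n, V n → ℕ)
    (hX : ∀ n v, X n v = (Finset.univ.filter
      (fun σ : VH → V n =>
        (∀ a b, H.Adj a b → (G n).Adj (σ a) (σ b)) ∧ Function.Injective σ ∧
        σ o = v)).card)
    -- `emb(H, G n)`
    (emb : ℕ → ℕ)
    (hemb : ∀ n, emb n = (Finset.univ.filter
      (fun σ : VH → V n =>
        (∀ a b, H.Adj a b → (G n).Adj (σ a) (σ b)) ∧ Function.Injective σ)).card)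
    -- the limit random variable `X*` on a probability space `(Ω, P)`
    {Ω : Type*} [MeasurableSpace Ω] (P : Measure Ω) [IsProbabilityMeasure P]
    (Xstar : Ω → ℕ) (hXstarMeas : Measurable Xstar)
    -- `X_n → X*` in distribution (pointwise convergence of point masses)
    (hdist : ∀ k : ℕ,
      Tendsto
        (fun n => ((Finset.univ.filter (fun v : V n => X n v = k)).card : ℝ)
                    / Fintype.card (V n))
        atTop (𝓝 (P {ω | Xstar ω = k}).toReal))
    -- uniform integrability of `D_n^(h-1)`
    (hUI : ∀ ε : ℝ, 0 < ε → ∃ Δ : ℕ, ∀ n,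
      (∑ v : V n, if Δ ≤ (G n).degree v then ((G n).degree v : ℝ) ^ (h - 1) else 0)
        / Fintype.card (V n) ≤ ε) :
    Tendsto (fun n => (emb n : ℝ) / Fintype.card (V n)) atTop
      (𝓝 (∫ ω, (Xstar ω : ℝ) ∂P)) := by
  have hN : ∀ n, (0:ℝ) < (Fintype.card (V n) : ℝ) := fun n => by
    exact_mod_cast Fintype.card_pos
  -- abbreviations
  set N : ℕ → ℝ := fun n => (Fintype.card (V n) : ℝ) with hNdef
  set m : ℕ → ℕ → ℝ := fun n K => (∑ v : V n, ((min (X n v) K : ℕ) : ℝ)) / N n with hmdef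
  set e : ℕ → ℝ := fun n => (emb n : ℝ) / N n with hedef
  set q : ℕ → ℝ := fun j => (P {ω | j + 1 ≤ Xstar ω}).toReal with hqdef
  set I : ℕ → ℝ := fun K => ∑ j ∈ Finset.range K, q j with hIdef
  set T : ℕ → ℕ → ℝ := fun n Δ =>
    (∑ v : V n, if Δ ≤ (G n).degree v then ((G n).degree v : ℝ) ^ (h - 1) else 0)
      / N n with hTdef
  -- emb as a sum of X
  have hsum : ∀ n, emb n = ∑ v : V n, X n v := by
    intro n
    rw [hemb n, Finset.card_eq_sum_card_fiberwise (f := fun σ : VH → V n => σ o)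
      (t := univ) (fun σ _ => Finset.mem_univ _)]
    refine Finset.sum_congr rfl fun v _ => ?_
    rw [hX n v]
    congr 1
    ext σ
    simp only [Finset.mem_filter, Finset.mem_univ, true_and]
    tauto
  -- m ≤ e
  have hms : ∀ n K, m n K ≤ e n := by
    intro n K
    rw [hmdef, hedef]
    dsimp only
    gcongr
    rw [hsum n]
    push_cast
    exact Finset.sum_le_sum fun v _ => by exact_mod_cast Nat.min_le_left _ _
  -- m bounded by K
  have hmb : ∀ n K, m n K ≤ K := by
    intro n K
    rw [hmdef]
    dsimp only
    rw [div_le_iff₀ (hN n)]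
    calc (∑ v : V n, ((min (X n v) K : ℕ) : ℝ))
        ≤ ∑ _v : V n, (K:ℝ) := Finset.sum_le_sum fun v _ => by
          exact_mod_cast Nat.min_le_right _ _
      _ = (Fintype.card (V n) : ℝ) * K := by
          rw [Finset.sum_const, Finset.card_univ, nsmul_eq_mul]
      _ = (K:ℝ) * N n := by rw [hNdef]; ring
  -- key inequality
  have hkey : ∀ (Δ : ℕ) (n : ℕ), e n ≤ m n ((Δ-1)^(h-1)) + (h : ℝ) * T n Δ := by
    intro Δ n
    have hk := key_ineq H o hconn (G n) Δ
    rw [hcard] at hk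
    rw [← hemb n] at hk
    simp only [← hX] at hk
    rw [Finset.sum_filter] at hk
    have hkR : (emb n : ℝ) ≤ (∑ v : V n, ((min (X n v) ((Δ-1)^(h-1)) : ℕ) : ℝ))
        + (h : ℝ) * ∑ v : V n,
          (if Δ ≤ (G n).degree v then ((G n).degree v : ℝ)^(h-1) else 0) := by
      exact_mod_cast hk
    rw [hedef, hmdef, hTdef]
    dsimp only
    rw [mul_div_assoc'] -- h * (S / N) = (h * S) / N
    rw [← add_div]
    gcongr
  -- measurability of level sets
  have hmeasS : ∀ j : ℕ, MeasurableSet {ω | j + 1 ≤ Xstar ω} := fun j =>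
    hXstarMeas measurableSet_Ici
  have hmeasEq : ∀ k : ℕ, MeasurableSet {ω | Xstar ω = k} := fun k =>
    hXstarMeas (measurableSet_singleton k)
  -- q j in terms of point masses
  have hq1 : ∀ j : ℕ, q j = 1 - ∑ k ∈ Finset.range (j+1), (P {ω | Xstar ω = k}).toReal := by
    intro j
    have hPsum : P {ω | Xstar ω ≤ j} = ∑ k ∈ Finset.range (j+1), P {ω | Xstar ω = k} := by
      rw [show {ω | Xstar ω ≤ j} = ⋃ k ∈ Finset.range (j+1), {ω | Xstar ω = k} by
        ext ω
        simp only [Set.mem_setOf_eq, Set.mem_iUnion, Finset.mem_range]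
        constructor
        · intro hle; exact ⟨Xstar ω, by omega, rfl⟩
        · rintro ⟨k, hk, hke⟩; omega]
      refine measure_biUnion_finset ?_ (fun k _ => hmeasEq k)
      intro k hk l hl hkl
      simp only [Function.onFun, Set.disjoint_left, Set.mem_setOf_eq]
      intro ω h1 h2
      exact hkl (by omega)
    have hcompl : P {ω | j + 1 ≤ Xstar ω} = 1 - P {ω | Xstar ω ≤ j} := by
      rw [show {ω | j + 1 ≤ Xstar ω} = {ω | Xstar ω ≤ j}ᶜ by
        ext ω
        simp only [Set.mem_setOf_eq, Set.mem_compl_iff]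
        omega]
      exact prob_compl_eq_one_sub (hXstarMeas measurableSet_Iic)
    rw [hqdef]
    dsimp only
    rw [hcompl, ENNReal.toReal_sub_of_le (prob_le_one) ENNReal.one_ne_top,
      ENNReal.toReal_one, hPsum, ENNReal.toReal_sum (fun k _ => measure_ne_top P _)]
  -- counting identity
  have hrcount : ∀ n j, ((univ.filter (fun v : V n => j + 1 ≤ X n v)).card : ℝ)
      = N n - ∑ k ∈ Finset.range (j+1),
          ((univ.filter (fun v : V n => X n v = k)).card : ℝ) := by
    intro n j
    have h1 : (univ.filter (fun v : V n => j + 1 ≤ X n v)).card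
        + (univ.filter (fun v : V n => ¬ (j + 1 ≤ X n v))).card = Fintype.card (V n) := by
      rw [Finset.card_filter_add_card_filter_not, Finset.card_univ]
    have h2 : (univ.filter (fun v : V n => ¬ (j + 1 ≤ X n v))).card
        = ∑ k ∈ Finset.range (j+1), (univ.filter (fun v : V n => X n v = k)).card := by
      rw [Finset.card_eq_sum_card_fiberwise (f := fun v => X n v) (t := Finset.range (j+1))
        (s := univ.filter (fun v : V n => ¬ (j + 1 ≤ X n v)))
        (fun v hv => by
          simp only [Finset.mem_coe, Finset.mem_filter, Finset.mem_univ, true_and, not_le] at hv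
          simp only [Finset.mem_coe, Finset.mem_range]
          omega)]
      refine Finset.sum_congr rfl fun k hk => ?_
      congr 1
      ext v
      simp only [Finset.mem_filter, Finset.mem_univ, true_and, Finset.mem_range] at hk ⊢
      omega
    rw [h2] at h1
    have h3 : ((univ.filter (fun v : V n => j + 1 ≤ X n v)).card : ℝ)
        + ∑ k ∈ Finset.range (j+1), ((univ.filter (fun v : V n => X n v = k)).card : ℝ)
        = N n := by
      rw [hNdef]
      push_cast
      exact_mod_cast congrArg (Nat.cast : ℕ → ℝ) h1
    linarith
  -- convergence of tail fractions
  have hr : ∀ j, Tendsto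
      (fun n => ((univ.filter (fun v : V n => j + 1 ≤ X n v)).card : ℝ) / N n)
      atTop (𝓝 (q j)) := by
    intro j
    have heq : ∀ n, ((univ.filter (fun v : V n => j + 1 ≤ X n v)).card : ℝ) / N n
        = 1 - ∑ k ∈ Finset.range (j+1),
            ((univ.filter (fun v : V n => X n v = k)).card : ℝ) / N n := by
      intro n
      rw [hrcount n j, sub_div, div_self (ne_of_gt (hN n)), Finset.sum_div]
    simp only [heq, hq1 j]
    exact tendsto_const_nhds.sub (tendsto_finset_sum _ fun k _ => hdist k)
  -- m as sum of tail fractions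
  have hmr : ∀ n K, m n K = ∑ j ∈ Finset.range K,
      ((univ.filter (fun v : V n => j + 1 ≤ X n v)).card : ℝ) / N n := by
    intro n K
    rw [hmdef]
    dsimp only
    rw [← Finset.sum_div]
    congr 1
    calc ∑ v : V n, ((min (X n v) K : ℕ) : ℝ)
        = ∑ v : V n, ∑ j ∈ Finset.range K, (if j + 1 ≤ X n v then (1:ℝ) else 0) := by
          refine Finset.sum_congr rfl fun v _ => ?_
          rw [min_eq_sum_ite (X n v) K]
          push_cast
          rfl
      _ = ∑ j ∈ Finset.range K, ∑ v : V n, (if j + 1 ≤ X n v then (1:ℝ) else 0) :=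
          Finset.sum_comm
      _ = ∑ j ∈ Finset.range K,
            ((univ.filter (fun v : V n => j + 1 ≤ X n v)).card : ℝ) := by
          refine Finset.sum_congr rfl fun j _ => ?_
          rw [Finset.sum_boole]
  have hmt : ∀ K, Tendsto (fun n => m n K) atTop (𝓝 (I K)) := by
    intro K
    simp only [hmr, hIdef]
    exact tendsto_finset_sum _ fun j _ => hr j
  -- integral of truncations
  have hgInt : ∀ K, Integrable (fun ω => ((min (Xstar ω) K : ℕ) : ℝ)) P ∧
      ∫ ω, ((min (Xstar ω) K : ℕ) : ℝ) ∂P = I K := by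
    intro K
    have hEq : (fun ω => ((min (Xstar ω) K : ℕ) : ℝ)) =
        fun ω => ∑ j ∈ Finset.range K,
          Set.indicator {ω' | j + 1 ≤ Xstar ω'} (fun _ => (1:ℝ)) ω := by
      funext ω
      rw [min_eq_sum_ite (Xstar ω) K]
      push_cast
      refine Finset.sum_congr rfl fun j _ => ?_
      rw [Set.indicator_apply]
      simp [Set.mem_setOf_eq]
    have hind : ∀ j : ℕ, Integrable
        (Set.indicator {ω' | j + 1 ≤ Xstar ω'} (fun _ => (1:ℝ))) P := by
      intro j
      rw [integrable_indicator_iff (hmeasS j)]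
      exact integrableOn_const (measure_ne_top P _)
    constructor
    · rw [hEq]; exact integrable_finset_sum _ fun j _ => hind j
    · rw [hEq, integral_finset_sum _ fun j _ => hind j, hIdef]
      refine Finset.sum_congr rfl fun j _ => ?_
      rw [integral_indicator_const (1:ℝ) (hmeasS j), smul_eq_mul, mul_one, hqdef, measureReal_def]
  -- uniform bound
  obtain ⟨Δ₁, hΔ₁⟩ := hUI 1 one_pos
  have heC : ∀ n, e n ≤ ((Δ₁ - 1)^(h-1) : ℕ) + (h:ℝ) := by
    intro n
    calc e n ≤ m n ((Δ₁-1)^(h-1)) + (h:ℝ) * T n Δ₁ := hkey Δ₁ n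
      _ ≤ (((Δ₁-1)^(h-1) : ℕ) : ℝ) + (h:ℝ) * 1 :=
          add_le_add (hmb n _) (mul_le_mul_of_nonneg_left (hΔ₁ n) (Nat.cast_nonneg h))
      _ = ((Δ₁ - 1)^(h-1) : ℕ) + (h:ℝ) := by ring
  have hIC : ∀ K, I K ≤ ((Δ₁ - 1)^(h-1) : ℕ) + (h:ℝ) := fun K =>
    le_of_tendsto (hmt K) (Filter.Eventually.of_forall fun n =>
      le_trans (hms n K) (heC n))
  -- integrability of Xstar
  have hlintop : ∫⁻ ω, ((Xstar ω : ℕ) : ℝ≥0∞) ∂P ≠ ⊤ := by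
    have hFm : ∀ K : ℕ, Measurable (fun ω => ((min (Xstar ω) K : ℕ) : ℝ≥0∞)) := fun K =>
      measurable_from_top.comp (hXstarMeas.min measurable_const)
    have hsup : (fun ω => ((Xstar ω : ℕ) : ℝ≥0∞)) =
        fun ω => ⨆ K : ℕ, ((min (Xstar ω) K : ℕ) : ℝ≥0∞) := by
      funext ω
      refine le_antisymm ?_ (iSup_le fun K => by exact_mod_cast min_le_left _ _)
      exact le_iSup_of_le (Xstar ω) (by rw [min_self])
    have hmono : Monotone (fun (K : ℕ) ω => ((min (Xstar ω) K : ℕ) : ℝ≥0∞)) := by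
      intro K K' hKK' ω
      show ((min (Xstar ω) K : ℕ) : ℝ≥0∞) ≤ ((min (Xstar ω) K' : ℕ) : ℝ≥0∞)
      exact_mod_cast min_le_min le_rfl hKK'
    rw [hsup, lintegral_iSup hFm hmono]
    have hle : ∀ K : ℕ, ∫⁻ ω, ((min (Xstar ω) K : ℕ) : ℝ≥0∞) ∂P
        ≤ ENNReal.ofReal (((Δ₁ - 1)^(h-1) : ℕ) + (h:ℝ)) := by
      intro K
      have h1 := MeasureTheory.ofReal_integral_eq_lintegral_ofReal (hgInt K).1
        (Filter.Eventually.of_forall fun ω => by positivity)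
      have h2 : (fun ω => ENNReal.ofReal (((min (Xstar ω) K : ℕ) : ℝ)))
          = fun ω => ((min (Xstar ω) K : ℕ) : ℝ≥0∞) :=
        funext fun ω => ENNReal.ofReal_natCast _
      rw [h2] at h1
      rw [← h1, (hgInt K).2]
      exact ENNReal.ofReal_le_ofReal (hIC K)
    exact ne_of_lt (lt_of_le_of_lt (iSup_le hle) ENNReal.ofReal_lt_top)
  have hXint : Integrable (fun ω => (Xstar ω : ℝ)) P := by
    have hint := integrable_toReal_of_lintegral_ne_top
      (f := fun ω => ((Xstar ω : ℕ) : ℝ≥0∞))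
      ((measurable_from_top.comp hXstarMeas :
        Measurable (fun ω => ((Xstar ω : ℕ) : ℝ≥0∞))).aemeasurable) hlintop
    have heq2 : (fun ω => ((Xstar ω : ℕ) : ℝ≥0∞).toReal) = fun ω => ((Xstar ω : ℕ) : ℝ) :=
      funext fun ω => ENNReal.toReal_natCast _
    rwa [heq2] at hint
  set L : ℝ := ∫ ω, (Xstar ω : ℝ) ∂P with hLdef
  have hIle : ∀ K, I K ≤ L := by
    intro K
    rw [← (hgInt K).2, hLdef]
    refine integral_mono (hgInt K).1 hXint fun ω => ?_
    show ((min (Xstar ω) K : ℕ) : ℝ) ≤ ((Xstar ω : ℕ) : ℝ)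
    exact_mod_cast min_le_left _ _
  have hIt : Tendsto I atTop (𝓝 L) := by
    have ht := MeasureTheory.tendsto_integral_of_dominated_convergence
      (F := fun K ω => ((min (Xstar ω) K : ℕ) : ℝ)) (f := fun ω => (Xstar ω : ℝ))
      (bound := fun ω => (Xstar ω : ℝ))
      (fun K => ((hgInt K).1).aestronglyMeasurable) hXint
      (fun K => Filter.Eventually.of_forall fun ω => by
        show ‖((min (Xstar ω) K : ℕ) : ℝ)‖ ≤ ((Xstar ω : ℕ) : ℝ)
        rw [Real.norm_eq_abs, abs_of_nonneg (by positivity)]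
        exact_mod_cast min_le_left _ _)
      (Filter.Eventually.of_forall fun ω =>
        tendsto_atTop_of_eventually_const (i₀ := Xstar ω) fun K hK => by
          show ((min (Xstar ω) K : ℕ) : ℝ) = ((Xstar ω : ℕ) : ℝ)
          rw [min_eq_left hK])
    have heqI : (fun K => ∫ ω, ((min (Xstar ω) K : ℕ) : ℝ) ∂P) = I :=
      funext fun K => (hgInt K).2
    rwa [heqI] at ht
  -- final epsilon argument
  refine Metric.tendsto_nhds.2 fun ε hε => ?_
  set ε' : ℝ := ε / (2 * ((h:ℝ) + 1)) with hε'def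
  have hε'pos : 0 < ε' := by
    rw [hε'def]
    positivity
  obtain ⟨Δ, hΔ⟩ := hUI ε' hε'pos
  obtain ⟨K₀, hK₀⟩ := Metric.tendsto_atTop.1 hIt (ε/2) (half_pos hε)
  have hK₀' : L - ε/2 < I K₀ := by
    have := hK₀ K₀ le_rfl
    rw [Real.dist_eq, abs_lt] at this
    linarith [this.1]
  have hlow : ∀ᶠ n in atTop, L - ε < e n := by
    have h1 : ∀ᶠ n in atTop, I K₀ - ε/2 < m n K₀ :=
      (hmt K₀).eventually (eventually_gt_nhds (by linarith))
    filter_upwards [h1] with n hn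
    have := hms n K₀
    linarith
  have hhigh : ∀ᶠ n in atTop, e n < L + ε := by
    have h2 : ∀ᶠ n in atTop, m n ((Δ-1)^(h-1)) < I ((Δ-1)^(h-1)) + ε/2 :=
      (hmt ((Δ-1)^(h-1))).eventually (eventually_lt_nhds (by linarith))
    filter_upwards [h2] with n hn
    have h3 := hkey Δ n
    have h5 : (h:ℝ) * T n Δ ≤ (h:ℝ) * ε' :=
      mul_le_mul_of_nonneg_left (hΔ n) (Nat.cast_nonneg h)
    have h6 : (h:ℝ) * ε' ≤ ε / 2 := by
      rw [hε'def, mul_div_assoc', div_le_div_iff₀ (by positivity) (by norm_num : (0:ℝ) < 2)]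
      nlinarith [hε.le, (Nat.cast_nonneg h : (0:ℝ) ≤ (h:ℝ))]
    have h7 := hIle ((Δ-1)^(h-1))
    linarith
  filter_upwards [hlow, hhigh] with n h1 h2
  rw [Real.dist_eq, abs_lt]
  constructor <;> linarith
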